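/- arXiv:2501.16850 — 3 statements merged into one kernel-verified Lean document; each statement's English description precedes it below -/
import Mathlib

section
/- (Discrete duality with piecewise constant gradients.) In the finite discrete setting, there exists u ∈ E minimizing J over E, the constraint set C := {τ : T → ℝ^d : Σ_{t∈T} μ_t τ_t·(G w)_t = ℓ(w) for all w ∈ E} is nonempty, there exists σ ∈ C minimizing J* over C, and min_{v ∈ E} J(v) = − min_{τ ∈ C} J*(τ). -/
open MeasureTheory
open Pointwise

/-- The convex conjugate `φ*(r) = sup_{s ≥ 0} (r s − φ(s))`. -/
noncomputable def conj (φ : ℝ → ℝ) (r : ℝ) : ℝ :=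
  ⨆ s : Set.Ici (0:ℝ), (r * (s : ℝ) - φ (s : ℝ))

/-- The right-continuous inverse `(φ')⁻¹(t) = sup {r ≥ 0 : φ'(r) ≤ t}`. -/
noncomputable def rcInv (φ' : ℝ → ℝ) (t : ℝ) : ℝ :=
  sSup {r : ℝ | 0 ≤ r ∧ φ' r ≤ t}

/-- An N-function `φ : [0,∞) → [0,∞)` with (right-continuous, non-decreasing)
density `φ'`, modeled by functions on `ℝ` restricted to `[0,∞)`. -/
structure IsNFunction (φ φ' : ℝ → ℝ) : Prop where
  continuousOn : ContinuousOn φ (Set.Ici 0)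
  convexOn : ConvexOn ℝ (Set.Ici 0) φ
  nonneg : ∀ t ∈ Set.Ici (0:ℝ), 0 ≤ φ t
  deriv_nonneg : ∀ t ∈ Set.Ici (0:ℝ), 0 ≤ φ' t
  deriv_mono : MonotoneOn φ' (Set.Ici 0)
  deriv_rightCont : ∀ t ∈ Set.Ici (0:ℝ), ContinuousWithinAt φ' (Set.Ici t) t
  eq_integral : ∀ t ∈ Set.Ici (0:ℝ), φ t = ∫ s in (0:ℝ)..t, φ' s
  deriv_zero : φ' 0 = 0
  deriv_pos : ∀ t > (0:ℝ), 0 < φ' t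
  deriv_tendsto : Filter.Tendsto φ' Filter.atTop Filter.atTop

variable {φ φ' : ℝ → ℝ}

lemma phi_zero (hN : IsNFunction φ φ') : φ 0 = 0 := by
  have := hN.eq_integral 0 (Set.mem_Ici.mpr le_rfl)
  simpa using this

lemma phi_intble (hN : IsNFunction φ φ') {a b : ℝ} (ha : 0 ≤ a) (hab : a ≤ b) :
    IntervalIntegrable φ' volume a b := by
  apply MonotoneOn.intervalIntegrable
  apply hN.deriv_mono.mono
  rw [Set.uIcc_of_le hab]
  intro x hx
  exact le_trans ha hx.1

/-- Lower bound `M s - M s₀ ≤ φ s` for `M ≥ 0` with suitable `s₀`. -/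
lemma phi_linear_lower (hN : IsNFunction φ φ') {M : ℝ} (hM : 0 ≤ M) :
    ∃ s₀ : ℝ, 0 ≤ s₀ ∧ ∀ s, 0 ≤ s → M * s - M * s₀ ≤ φ s := by
  obtain ⟨s₁, hs₁⟩ := (Filter.tendsto_atTop.mp hN.deriv_tendsto M).exists_forall_of_atTop
  refine ⟨max s₁ 0, le_max_right _ _, fun s hs => ?_⟩
  set s₀ := max s₁ 0 with hs₀def
  have hs₀ : 0 ≤ s₀ := le_max_right _ _
  rcases le_or_gt s s₀ with h | h
  · have h1 : 0 ≤ φ s := hN.nonneg s hs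
    nlinarith
  · have key : φ s - φ s₀ = ∫ x in s₀..s, φ' x := by
      rw [hN.eq_integral s hs, hN.eq_integral s₀ hs₀]
      rw [← intervalIntegral.integral_add_adjacent_intervals
        (phi_intble hN le_rfl hs₀) (phi_intble hN hs₀ h.le)]
      ring
    have h2 : M * (s - s₀) ≤ ∫ x in s₀..s, φ' x := by
      have : ∀ x ∈ Set.Icc s₀ s, M ≤ φ' x := by
        intro x hx
        exact hs₁ x (le_trans (le_max_left _ _) hx.1)
      calc M * (s - s₀) = ∫ _ in s₀..s, M := by
            rw [intervalIntegral.integral_const, smul_eq_mul]; ring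
        _ ≤ ∫ x in s₀..s, φ' x := by
            apply intervalIntegral.integral_mono_on h.le
              intervalIntegrable_const (phi_intble hN hs₀ h.le)
            intro x hx; exact hs₁ x (le_trans (le_max_left _ _) hx.1)
    have h3 : 0 ≤ φ s₀ := hN.nonneg s₀ hs₀
    nlinarith

lemma conj_bddAbove (hN : IsNFunction φ φ') {r : ℝ} (hr : 0 ≤ r) :
    BddAbove (Set.range fun s : Set.Ici (0:ℝ) => r * (s:ℝ) - φ (s:ℝ)) := by
  obtain ⟨s₀, hs₀, hlow⟩ := phi_linear_lower hN (M := r + 1) (by linarith)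
  refine ⟨(r+1) * s₀, ?_⟩
  rintro y ⟨⟨s, hs⟩, rfl⟩
  have hs' : (0:ℝ) ≤ s := hs
  have h := hlow s hs'
  simp only
  nlinarith

/-- Fenchel–Young: `r s - φ s ≤ conj φ r` for `r, s ≥ 0`. -/
lemma young (hN : IsNFunction φ φ') {r s : ℝ} (hr : 0 ≤ r) (hs : 0 ≤ s) :
    r * s - φ s ≤ conj φ r :=
  le_ciSup (conj_bddAbove hN hr) (⟨s, hs⟩ : Set.Ici (0:ℝ))

lemma conj_nonneg (hN : IsNFunction φ φ') {r : ℝ} (hr : 0 ≤ r) : 0 ≤ conj φ r := by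
  have := young hN hr (le_refl 0)
  rw [phi_zero hN] at this
  simpa using this

lemma phi_mono (hN : IsNFunction φ φ') : MonotoneOn φ (Set.Ici 0) := by
  intro a ha b hb hab
  rw [hN.eq_integral a ha, hN.eq_integral b hb,
    ← intervalIntegral.integral_add_adjacent_intervals
      (phi_intble hN le_rfl ha) (phi_intble hN ha hab)]
  have h2 : 0 ≤ ∫ x in a..b, φ' x := by
    apply intervalIntegral.integral_nonneg hab
    intro x hx; exact hN.deriv_nonneg x (le_trans ha hx.1)
  linarith

section NormedF
variable {F : Type*} [NormedAddCommGroup F] [NormedSpace ℝ F]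

/-- `φ ∘ ‖·‖` is convex. -/
lemma gconv (hN : IsNFunction φ φ') : ConvexOn ℝ Set.univ (fun y : F => φ ‖y‖) := by
  refine ⟨convex_univ, fun y1 _ y2 _ a b ha hb hab => ?_⟩
  have h1 : ‖a • y1 + b • y2‖ ≤ a * ‖y1‖ + b * ‖y2‖ := by
    calc ‖a • y1 + b • y2‖ ≤ ‖a • y1‖ + ‖b • y2‖ := norm_add_le _ _
      _ = a * ‖y1‖ + b * ‖y2‖ := by
          rw [norm_smul, norm_smul, Real.norm_eq_abs, Real.norm_eq_abs,
            abs_of_nonneg ha, abs_of_nonneg hb]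
  have h2 : φ ‖a • y1 + b • y2‖ ≤ φ (a * ‖y1‖ + b * ‖y2‖) :=
    phi_mono hN (Set.mem_Ici.mpr (norm_nonneg _)) (Set.mem_Ici.mpr (by positivity)) h1
  have h3 : φ (a * ‖y1‖ + b * ‖y2‖) ≤ a * φ ‖y1‖ + b * φ ‖y2‖ := by
    have := hN.convexOn.2 (Set.mem_Ici.mpr (norm_nonneg y1))
      (Set.mem_Ici.mpr (norm_nonneg y2)) ha hb hab
    simpa [smul_eq_mul] using this
  exact h2.trans h3

/-- Convexity of `s ↦ φ ‖x + s • z‖`. -/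
lemma hconv (hN : IsNFunction φ φ') (x z : F) :
    ConvexOn ℝ Set.univ (fun s : ℝ => φ ‖x + s • z‖) := by
  have := (gconv (F := F) hN).comp_affineMap (AffineMap.lineMap x (x + z))
  have heq : ∀ s : ℝ, (AffineMap.lineMap x (x + z)) s = x + s • z := by
    intro s; simp [AffineMap.lineMap_apply]; module
  refine ⟨convex_univ, fun y1 hy1 y2 hy2 a b ha hb hab => ?_⟩
  have h := this.2 (Set.mem_preimage.mpr (Set.mem_univ _))
    (Set.mem_preimage.mpr (Set.mem_univ _)) ha hb hab (x := y1) (y := y2)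
  simpa [Function.comp, heq] using h

/-- difference quotient -/
noncomputable def dq (φ : ℝ → ℝ) (x z : F) (s : ℝ) : ℝ := (φ ‖x + s • z‖ - φ ‖x‖) / s

lemma dq_mono (hN : IsNFunction φ φ') (x z : F) {s s' : ℝ} (hs : 0 < s) (hss' : s ≤ s') :
    dq φ x z s ≤ dq φ x z s' := by
  have := (hconv hN x z).secant_mono (a := 0) (x := s) (y := s')
    (Set.mem_univ _) (Set.mem_univ _) (Set.mem_univ _) (ne_of_gt hs)
    (ne_of_gt (lt_of_lt_of_le hs hss')) hss'
  simpa [dq] using this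

lemma dq_lb (hN : IsNFunction φ φ') (x z : F) {s : ℝ} (hs : 0 < s) :
    φ ‖x‖ - φ ‖x - z‖ ≤ dq φ x z s := by
  have := (hconv hN x z).secant_mono (a := 0) (x := -1) (y := s)
    (Set.mem_univ _) (Set.mem_univ _) (Set.mem_univ _) (by norm_num)
    (ne_of_gt hs) (by linarith)
  rw [show x + (-1:ℝ) • z = x - z by module, show x + (0:ℝ) • z = x by module] at this
  calc φ ‖x‖ - φ ‖x - z‖ = (φ ‖x - z‖ - φ ‖x‖) / (-1 - 0) := by ring
    _ ≤ (φ ‖x + s • z‖ - φ ‖x‖) / (s - 0) := this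
    _ = dq φ x z s := by rw [dq, sub_zero]

end NormedF

section Pfun
variable {F : Type*} [NormedAddCommGroup F] [NormedSpace ℝ F]

/-- One-sided directional derivative surrogate: infimum of difference quotients. -/
noncomputable def pfun (φ : ℝ → ℝ) (x z : F) : ℝ := sInf (dq φ x z '' Set.Ioi 0)

lemma pfun_set_nonempty (φ : ℝ → ℝ) (x z : F) : (dq φ x z '' Set.Ioi 0).Nonempty :=
  ⟨dq φ x z 1, 1, by norm_num, rfl⟩

lemma pfun_set_bddBelow (hN : IsNFunction φ φ') (x z : F) :
    BddBelow (dq φ x z '' Set.Ioi 0) := by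
  refine ⟨φ ‖x‖ - φ ‖x - z‖, ?_⟩
  rintro y ⟨s, hs, rfl⟩
  exact dq_lb hN x z hs

lemma pfun_le_dq (hN : IsNFunction φ φ') (x z : F) {s : ℝ} (hs : 0 < s) :
    pfun φ x z ≤ dq φ x z s :=
  csInf_le (pfun_set_bddBelow hN x z) ⟨s, hs, rfl⟩

lemma pfun_le (hN : IsNFunction φ φ') (x z : F) :
    pfun φ x z ≤ φ ‖x + z‖ - φ ‖x‖ := by
  have := pfun_le_dq hN x z (s := 1) one_pos
  simpa [dq] using this

lemma dq_zero (φ : ℝ → ℝ) (x : F) {s : ℝ} : dq φ x (0 : F) s = 0 := by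
  simp [dq]

lemma pfun_zero (hN : IsNFunction φ φ') (x : F) : pfun φ x (0 : F) = 0 := by
  refine le_antisymm ?_ ?_
  · have := pfun_le_dq hN x (0 : F) one_pos
    rwa [dq_zero] at this
  · apply le_csInf (pfun_set_nonempty φ x 0)
    rintro y ⟨s, _, rfl⟩
    rw [dq_zero]

lemma dq_smul (φ : ℝ → ℝ) (x z : F) {c s : ℝ} (hc : 0 < c) (hs : s ≠ 0) :
    dq φ x (c • z) s = c * dq φ x z (s * c) := by
  have hc' : c ≠ 0 := ne_of_gt hc
  rw [dq, dq, smul_smul]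
  field_simp

lemma pfun_smul (hN : IsNFunction φ φ') (x z : F) {c : ℝ} (hc : 0 < c) :
    pfun φ x (c • z) = c * pfun φ x z := by
  have hset : dq φ x (c • z) '' Set.Ioi 0 = (c • (dq φ x z '' Set.Ioi 0) : Set ℝ) := by
    ext y
    constructor
    · rintro ⟨s, hs, rfl⟩
      have hs' : 0 < s := hs
      rw [dq_smul φ x z hc (ne_of_gt hs')]
      exact Set.smul_mem_smul_set ⟨s * c, Set.mem_Ioi.mpr (by positivity), rfl⟩
    · rintro ⟨-, ⟨s, hs, rfl⟩, rfl⟩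
      have hs' : 0 < s := hs
      refine ⟨s / c, Set.mem_Ioi.mpr (by positivity), ?_⟩
      rw [dq_smul φ x z hc (ne_of_gt (div_pos hs' hc)), div_mul_cancel₀ _ (ne_of_gt hc)]
      simp [smul_eq_mul]
  rw [pfun, hset, Real.sInf_smul_of_nonneg hc.le, smul_eq_mul, pfun]

lemma dq_add (hN : IsNFunction φ φ') (x z1 z2 : F) {s : ℝ} (hs : 0 < s) :
    dq φ x (z1 + z2) s ≤ dq φ x z1 (2 * s) + dq φ x z2 (2 * s) := by
  have key : φ ‖x + s • (z1 + z2)‖ ≤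
      (1/2 : ℝ) * φ ‖x + (2*s) • z1‖ + (1/2 : ℝ) * φ ‖x + (2*s) • z2‖ := by
    have heq : x + s • (z1 + z2) =
        (1/2 : ℝ) • (x + (2*s) • z1) + (1/2 : ℝ) • (x + (2*s) • z2) := by module
    rw [heq]
    exact (gconv hN).2 (Set.mem_univ _) (Set.mem_univ _) (by norm_num) (by norm_num)
      (by norm_num)
  rw [dq, dq, dq]
  rw [div_add_div _ _ (by positivity : (2*s) ≠ 0) (by positivity : (2*s) ≠ 0),
    div_le_div_iff₀ hs (by nlinarith)]
  nlinarith [mul_le_mul_of_nonneg_left key (by positivity : (0:ℝ) ≤ 4*s^2), mul_pos hs hs]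

lemma pfun_add (hN : IsNFunction φ φ') (x z1 z2 : F) :
    pfun φ x (z1 + z2) ≤ pfun φ x z1 + pfun φ x z2 := by
  apply le_of_forall_pos_le_add
  intro ε hε
  obtain ⟨y1, ⟨s1, hs1, rfl⟩, hy1⟩ :=
    Real.lt_sInf_add_pos (pfun_set_nonempty φ x z1) (half_pos hε)
  obtain ⟨y2, ⟨s2, hs2, rfl⟩, hy2⟩ :=
    Real.lt_sInf_add_pos (pfun_set_nonempty φ x z2) (half_pos hε)
  set s := min s1 s2 / 2 with hsdef
  have hs : 0 < s := by have := lt_min (show (0:ℝ) < s1 from hs1) (show (0:ℝ) < s2 from hs2); positivity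
  have h1 : dq φ x z1 (2 * s) ≤ dq φ x z1 s1 := by
    apply dq_mono hN x z1 (by linarith)
    rw [hsdef]; rw [mul_div_cancel₀ _ (two_ne_zero)]; exact min_le_left _ _
  have h2 : dq φ x z2 (2 * s) ≤ dq φ x z2 s2 := by
    apply dq_mono hN x z2 (by linarith)
    rw [hsdef]; rw [mul_div_cancel₀ _ (two_ne_zero)]; exact min_le_right _ _
  calc pfun φ x (z1 + z2) ≤ dq φ x (z1 + z2) s := pfun_le_dq hN x _ hs
    _ ≤ dq φ x z1 (2*s) + dq φ x z2 (2*s) := dq_add hN x z1 z2 hs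
    _ ≤ dq φ x z1 s1 + dq φ x z2 s2 := add_le_add h1 h2
    _ ≤ pfun φ x z1 + pfun φ x z2 + ε := by
        rw [pfun, pfun]; linarith

end Pfun

section InnerF
variable {F : Type*} [NormedAddCommGroup F] [InnerProductSpace ℝ F]

lemma conj_eq_of_subgrad (hN : IsNFunction φ φ') {x σ : F}
    (h : ∀ y : F, φ ‖x‖ + (inner ℝ σ (y - x) : ℝ) ≤ φ ‖y‖) :
    conj φ ‖σ‖ = (inner ℝ σ x : ℝ) - φ ‖x‖ := by
  refine le_antisymm (ciSup_le ?_) ?_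
  · rintro ⟨s, hs⟩
    have hs : (0:ℝ) ≤ s := hs
    by_cases hσ : σ = 0
    · have h0 := h 0
      rw [hσ] at *
      simp only [inner_zero_left, norm_zero, add_zero] at h0 ⊢
      rw [phi_zero hN] at h0
      have := hN.nonneg s hs
      simp only [zero_mul]
      linarith
    · have hσn : (0:ℝ) < ‖σ‖ := norm_pos_iff.mpr hσ
      have hy := h ((s / ‖σ‖) • σ)
      have hny : ‖(s / ‖σ‖) • σ‖ = s := by
        rw [norm_smul, Real.norm_eq_abs, abs_of_nonneg (by positivity), div_mul_cancel₀]
        exact ne_of_gt hσn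
      rw [inner_sub_right, hny, real_inner_smul_right,
        real_inner_self_eq_norm_mul_norm] at hy
      have : s / ‖σ‖ * (‖σ‖ * ‖σ‖) = ‖σ‖ * s := by field_simp
      rw [this] at hy
      simp only
      linarith
  · have h1 := real_inner_le_norm σ x
    have h2 := young hN (norm_nonneg σ) (norm_nonneg x)
    linarith

end InnerF

/-- discrete duality in the finite discrete setting. There exists a
minimizer `u` of `J` over `E`, the constraint set `C` is nonempty, there exists a
minimizer `σ` of `J*` over `C`, and `min_E J = − min_C J*`. -/
theorem discrete_duality {d : ℕ} (hd : 1 ≤ d)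
    {T : Type*} [Fintype T] [Nonempty T]
    (μ : T → ℝ) (hμ : ∀ t, 0 < μ t)
    {E : Type*} [AddCommGroup E] [Module ℝ E] [FiniteDimensional ℝ E]
    (G : E →ₗ[ℝ] (T → EuclideanSpace ℝ (Fin d))) (hG : Function.Injective G)
    (ℓ : E →ₗ[ℝ] ℝ)
    (φ φ' : ℝ → ℝ) (hN : IsNFunction φ φ')
    (J : E → ℝ) (hJ : ∀ v, J v = (∑ t, μ t * φ ‖G v t‖) - ℓ v)
    (Jstar : (T → EuclideanSpace ℝ (Fin d)) → ℝ)
    (hJstar : ∀ τ, Jstar τ = ∑ t, μ t * conj φ ‖τ t‖)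
    (C : Set (T → EuclideanSpace ℝ (Fin d)))
    (hC : C = {τ | ∀ w : E, (∑ t, μ t * (inner ℝ (τ t) (G w t) : ℝ)) = ℓ w}) :
    (∃ u : E, ∀ v : E, J u ≤ J v) ∧
    C.Nonempty ∧
    (∃ σ ∈ C, ∀ τ ∈ C, Jstar σ ≤ Jstar τ) ∧
    (∃ (u : E) (σ : T → EuclideanSpace ℝ (Fin d)),
      (∀ v : E, J u ≤ J v) ∧ σ ∈ C ∧ (∀ τ ∈ C, Jstar σ ≤ Jstar τ) ∧
      J u = - Jstar σ) := by
  classical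
  let W : Submodule ℝ (T → EuclideanSpace ℝ (Fin d)) := LinearMap.range G
  let e : E ≃ₗ[ℝ] W := LinearEquiv.ofInjective G hG
  have hecoe : ∀ v : E, ((e v : W) : T → EuclideanSpace ℝ (Fin d)) = G v := fun v => rfl
  let f : W →ₗ[ℝ] ℝ := ℓ.comp (e.symm : W ≃ₗ[ℝ] E).toLinearMap
  let K : W → ℝ := fun x => (∑ t, μ t * φ ‖(x : T → EuclideanSpace ℝ (Fin d)) t‖) - f x
  have hJK : ∀ v : E, J v = K (e v) := by
    intro v
    rw [hJ]
    simp only [K, f, LinearMap.comp_apply, LinearEquiv.coe_coe, hecoe,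
      LinearEquiv.symm_apply_apply]
  -- continuity of K
  have hKcont : Continuous K := by
    apply Continuous.sub
    · apply Continuous.comp (g := fun x : T → EuclideanSpace ℝ (Fin d) => ∑ t, μ t * φ ‖x t‖) ?_ continuous_subtype_val
      apply continuous_finset_sum
      intro t _
      exact continuous_const.mul
        (hN.continuousOn.comp_continuous ((continuous_apply t).norm)
          (fun x => Set.mem_Ici.mpr (norm_nonneg _)))
    · exact f.continuous_of_finiteDimensional
  -- coercivity
  let fC : W →L[ℝ] ℝ := LinearMap.toContinuousLinearMap f
  let L : ℝ := ‖fC‖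
  have hL0 : 0 ≤ L := show (0:ℝ) ≤ ‖fC‖ from ContinuousLinearMap.opNorm_nonneg _
  let c : ℝ := Finset.univ.inf' Finset.univ_nonempty μ
  have hc : 0 < c := by
    rw [show c = Finset.univ.inf' Finset.univ_nonempty μ from rfl, Finset.lt_inf'_iff]
    exact fun t _ => hμ t
  have hcle : ∀ t, c ≤ μ t := fun t => Finset.inf'_le _ (Finset.mem_univ t)
  let M : ℝ := (L + 1) / c
  have hMdef : M = (L + 1) / c := rfl
  have hM0 : 0 ≤ M := by rw [hMdef]; positivity
  obtain ⟨s₀, hs₀, hlow⟩ := phi_linear_lower hN hM0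
  let B : ℝ := M * s₀ * ∑ t, μ t
  have hBdef : B = M * s₀ * ∑ t, μ t := rfl
  have hcoer : ∀ x : W, ‖x‖ - B ≤ K x := by
    intro x
    have h1 : ∀ t, μ t * (M * ‖(x : T → EuclideanSpace ℝ (Fin d)) t‖ - M * s₀) ≤ μ t * φ ‖(x : T → EuclideanSpace ℝ (Fin d)) t‖ := fun t =>
      mul_le_mul_of_nonneg_left (hlow _ (norm_nonneg _)) (hμ t).le
    have h2 : ∑ t, μ t * (M * ‖(x : T → EuclideanSpace ℝ (Fin d)) t‖ - M * s₀) ≤ ∑ t, μ t * φ ‖(x : T → EuclideanSpace ℝ (Fin d)) t‖ :=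
      Finset.sum_le_sum (fun t _ => h1 t)
    have h3 : ∑ t, μ t * (M * ‖(x : T → EuclideanSpace ℝ (Fin d)) t‖ - M * s₀)
        = M * (∑ t, μ t * ‖(x : T → EuclideanSpace ℝ (Fin d)) t‖) - B := by
      rw [hBdef, Finset.mul_sum, Finset.mul_sum, ← Finset.sum_sub_distrib]
      exact Finset.sum_congr rfl fun t _ => by ring
    have h4 : ‖x‖ ≤ ∑ t, ‖(x : T → EuclideanSpace ℝ (Fin d)) t‖ := by
      have hnn : (0:ℝ) ≤ ∑ t, ‖(x : T → EuclideanSpace ℝ (Fin d)) t‖ := Finset.sum_nonneg (fun t _ => norm_nonneg _)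
      rw [show ‖x‖ = ‖(x : T → EuclideanSpace ℝ (Fin d))‖ from rfl]
      rw [pi_norm_le_iff_of_nonneg hnn]
      intro t
      exact Finset.single_le_sum (f := fun t => ‖(x : T → EuclideanSpace ℝ (Fin d)) t‖)
        (fun t _ => norm_nonneg _) (Finset.mem_univ t)
    have h5 : c * ∑ t, ‖(x : T → EuclideanSpace ℝ (Fin d)) t‖ ≤ ∑ t, μ t * ‖(x : T → EuclideanSpace ℝ (Fin d)) t‖ := by
      rw [Finset.mul_sum]
      exact Finset.sum_le_sum (fun t _ => mul_le_mul_of_nonneg_right (hcle t) (norm_nonneg _))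
    have h6 : f x ≤ L * ‖x‖ := by
      have := fC.le_opNorm x
      have h7 : f x ≤ ‖fC x‖ := le_abs_self _
      have h8 : fC x = f x := rfl
      rw [h8] at h7 this
      linarith
    have h9 : M * (c * ‖x‖) = (L + 1) * ‖x‖ := by
      rw [hMdef]; field_simp
    have h10 : c * ‖x‖ ≤ c * ∑ t, ‖(x : T → EuclideanSpace ℝ (Fin d)) t‖ := mul_le_mul_of_nonneg_left h4 hc.le
    have h11 : M * (c * ‖x‖) ≤ M * ∑ t, μ t * ‖(x : T → EuclideanSpace ℝ (Fin d)) t‖ :=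
      mul_le_mul_of_nonneg_left (le_trans h10 h5) hM0
    have hnx : 0 ≤ ‖x‖ := norm_nonneg _
    simp only [K]
    nlinarith
  -- existence of a minimizer of K on W
  have hScompact : IsCompact {x : W | K x ≤ K 0} := by
    apply Metric.isCompact_of_isClosed_isBounded
    · exact isClosed_le hKcont continuous_const
    · apply Bornology.IsBounded.subset (Metric.isBounded_closedBall (x := (0:W)) (r := K 0 + B))
      intro x hx
      rw [Metric.mem_closedBall, dist_zero_right]
      have := hcoer x
      have hx' : K x ≤ K 0 := hx
      linarith
  obtain ⟨x₀, hx₀S, hx₀min⟩ := hScompact.exists_isMinOn ⟨0, show K 0 ≤ K 0 from le_rfl⟩ hKcont.continuousOn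
  have hx₀ : ∀ x : W, K x₀ ≤ K x := by
    intro x
    by_cases hx : K x ≤ K 0
    · exact hx₀min hx
    · exact le_trans (hx₀min (le_refl (K 0))) (le_of_not_ge hx)
  set u : E := e.symm x₀ with hudef
  have hJu : ∀ v : E, J u ≤ J v := by
    intro v
    rw [hJK u, hJK v, hudef, LinearEquiv.apply_symm_apply]
    exact hx₀ (e v)
  -- directional derivative inequality at the minimizer
  have hdir : ∀ v : E, ∀ s : ℝ, 0 < s →
      ℓ v ≤ ∑ t, μ t * dq φ (G u t) (G v t) s := by
    intro v s hs
    have h := hJu (u + s • v)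
    rw [hJ, hJ] at h
    have hl : ℓ (u + s • v) = ℓ u + s * ℓ v := by
      rw [map_add, LinearMap.map_smul, smul_eq_mul]
    rw [hl] at h
    simp only [map_add, LinearMap.map_smul, Pi.add_apply, Pi.smul_apply] at h
    have hsplit : ∑ t, μ t * (φ ‖G u t + s • G v t‖ - φ ‖G u t‖)
        = (∑ t, μ t * φ ‖G u t + s • G v t‖) - ∑ t, μ t * φ ‖G u t‖ := by
      rw [← Finset.sum_sub_distrib]
      exact Finset.sum_congr rfl fun t _ => by ring
    have h3 : s * ℓ v ≤ ∑ t, μ t * (φ ‖G u t + s • G v t‖ - φ ‖G u t‖) := by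
      rw [hsplit]; linarith
    have h4 : ∑ t, μ t * dq φ (G u t) (G v t) s
        = (∑ t, μ t * (φ ‖G u t + s • G v t‖ - φ ‖G u t‖)) / s := by
      rw [Finset.sum_div]
      exact Finset.sum_congr rfl fun t _ => by rw [dq, mul_div_assoc]
    rw [h4, le_div_iff₀ hs]
    linarith
  have hp : ∀ v : E, ℓ v ≤ ∑ t, μ t * pfun φ (G u t) (G v t) := by
    intro v
    apply le_of_forall_pos_le_add
    intro ε hε
    have hcard : (0:ℝ) < (Fintype.card T : ℝ) := by
      have := Fintype.card_pos (α := T)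
      positivity
    have hchoice : ∀ t : T, ∃ s : ℝ, 0 < s ∧ dq φ (G u t) (G v t) s
        < pfun φ (G u t) (G v t) + ε / (Fintype.card T * μ t) := by
      intro t
      have hpos : 0 < ε / (Fintype.card T * μ t) := by
        have := hμ t; positivity
      obtain ⟨y, ⟨s, hs, rfl⟩, hy⟩ :=
        Real.lt_sInf_add_pos (pfun_set_nonempty φ (G u t) (G v t)) hpos
      exact ⟨s, hs, hy⟩
    choose sfun hsfun hdqlt using hchoice
    have hsmin : 0 < Finset.univ.inf' Finset.univ_nonempty sfun := by
      rw [Finset.lt_inf'_iff]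
      exact fun t _ => hsfun t
    set smin := Finset.univ.inf' Finset.univ_nonempty sfun with hsmindef
    have h1 := hdir v smin hsmin
    have h2 : ∑ t, μ t * dq φ (G u t) (G v t) smin
        ≤ ∑ t, (μ t * pfun φ (G u t) (G v t) + ε / Fintype.card T) := by
      apply Finset.sum_le_sum
      intro t _
      have hd : dq φ (G u t) (G v t) smin ≤ dq φ (G u t) (G v t) (sfun t) :=
        dq_mono hN _ _ hsmin (Finset.inf'_le _ (Finset.mem_univ t))
      have hlt := hdqlt t
      have hμt := hμ t
      have hmul : μ t * dq φ (G u t) (G v t) smin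
          ≤ μ t * (pfun φ (G u t) (G v t) + ε / (Fintype.card T * μ t)) :=
        mul_le_mul_of_nonneg_left (le_of_lt (lt_of_le_of_lt hd hlt)) hμt.le
      have heq : μ t * (pfun φ (G u t) (G v t) + ε / (Fintype.card T * μ t))
          = μ t * pfun φ (G u t) (G v t) + ε / Fintype.card T := by
        have hne : μ t ≠ 0 := (hμ t).ne'
        field_simp
      linarith
    have h3 : ∑ t : T, (μ t * pfun φ (G u t) (G v t) + ε / Fintype.card T)
        = (∑ t, μ t * pfun φ (G u t) (G v t)) + ε := by
      rw [Finset.sum_add_distrib, Finset.sum_const, Finset.card_univ, nsmul_eq_mul]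
      congr 1
      field_simp
    linarith
  -- Hahn–Banach extension
  let N : (T → EuclideanSpace ℝ (Fin d)) → ℝ := fun η => ∑ t, μ t * pfun φ (G u t) (η t)
  have hNdef : ∀ η, N η = ∑ t, μ t * pfun φ (G u t) (η t) := fun _ => rfl
  have hNhom : ∀ cc : ℝ, 0 < cc → ∀ η, N (cc • η) = cc * N η := by
    intro cc hcc η
    rw [hNdef, hNdef, Finset.mul_sum]
    apply Finset.sum_congr rfl
    intro t _
    rw [show (cc • η) t = cc • η t from rfl, pfun_smul hN _ _ hcc]
    ring
  have hNadd : ∀ η₁ η₂, N (η₁ + η₂) ≤ N η₁ + N η₂ := by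
    intro η₁ η₂
    rw [hNdef, hNdef, hNdef, ← Finset.sum_add_distrib]
    apply Finset.sum_le_sum
    intro t _
    have hadd := pfun_add hN (G u t) (η₁ t) (η₂ t)
    have h := mul_le_mul_of_nonneg_left hadd (hμ t).le
    rw [show (η₁ + η₂) t = η₁ t + η₂ t from rfl]
    nlinarith
  let pm : (T → EuclideanSpace ℝ (Fin d)) →ₗ.[ℝ] ℝ := ⟨W, f⟩
  have hfN : ∀ x : pm.domain, pm x ≤ N x := by
    rintro ⟨x, hx⟩
    have hxv : x = G (e.symm ⟨x, hx⟩) := by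
      have h1 := hecoe (e.symm ⟨x, hx⟩)
      rw [LinearEquiv.apply_symm_apply] at h1
      exact h1
    have hpmx : pm ⟨x, hx⟩ = ℓ (e.symm ⟨x, hx⟩) := rfl
    rw [hpmx]
    have := hp (e.symm ⟨x, hx⟩)
    calc ℓ (e.symm ⟨x, hx⟩) ≤ ∑ t, μ t * pfun φ (G u t) (G (e.symm ⟨x, hx⟩) t) := this
      _ = N x := by rw [hNdef]
                    exact Finset.sum_congr rfl fun t _ => by rw [← hxv]
  obtain ⟨g, hg1, hg2⟩ := exists_extension_of_le_sublinear pm N hNhom hNadd hfN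
  -- construct σ via Riesz representation
  let b : T → EuclideanSpace ℝ (Fin d) := fun t =>
    (InnerProductSpace.toDual ℝ (EuclideanSpace ℝ (Fin d))).symm
      (LinearMap.toContinuousLinearMap
        (g ∘ₗ (LinearMap.single ℝ (fun _ : T => EuclideanSpace ℝ (Fin d)) t)))
  have hb : ∀ t (z : EuclideanSpace ℝ (Fin d)),
      (inner ℝ (b t) z : ℝ) = g (Pi.single t z) := by
    intro t z
    rw [show (inner ℝ (b t) z : ℝ) = _ from InnerProductSpace.toDual_symm_apply]
    rfl
  let σ : T → EuclideanSpace ℝ (Fin d) := fun t => (μ t)⁻¹ • b t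
  have hσinner : ∀ t (z : EuclideanSpace ℝ (Fin d)),
      μ t * (inner ℝ (σ t) z : ℝ) = g (Pi.single t z) := by
    intro t z
    rw [show σ t = (μ t)⁻¹ • b t from rfl, real_inner_smul_left, hb]
    have hne : μ t ≠ 0 := (hμ t).ne'
    field_simp
  have hdecomp : ∀ η : T → EuclideanSpace ℝ (Fin d),
      ∑ t, μ t * (inner ℝ (σ t) (η t) : ℝ) = g η := by
    intro η
    rw [show (∑ t, μ t * (inner ℝ (σ t) (η t) : ℝ)) = ∑ t, g (Pi.single t (η t)) from
      Finset.sum_congr rfl fun t _ => hσinner t (η t)]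
    rw [← map_sum]
    congr 1
    exact Finset.univ_sum_single η
  have hσC : σ ∈ C := by
    rw [hC]
    intro w
    rw [hdecomp (G w)]
    have hew : e w = ⟨G w, LinearMap.mem_range_self G w⟩ := Subtype.ext (hecoe w)
    have h1 := hg1 (⟨G w, LinearMap.mem_range_self G w⟩ : pm.domain)
    rw [← hew] at h1
    calc g (G w) = g ((e w : W) : T → EuclideanSpace ℝ (Fin d)) := by rw [hecoe]
      _ = pm (e w) := h1
      _ = ℓ (e.symm (e w)) := rfl
      _ = ℓ w := by rw [LinearEquiv.symm_apply_apply]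
  have hsub : ∀ t (z : EuclideanSpace ℝ (Fin d)),
      (inner ℝ (σ t) z : ℝ) ≤ pfun φ (G u t) z := by
    intro t z
    have h1 := hg2 (Pi.single t z)
    have h2 : N (Pi.single t z) = μ t * pfun φ (G u t) z := by
      rw [hNdef, Finset.sum_eq_single t]
      · rw [Pi.single_eq_same]
      · intro t' _ hne
        rw [Pi.single_eq_of_ne hne, pfun_zero hN]
        ring
      · intro h; exact absurd (Finset.mem_univ t) h
    rw [← hσinner t z, h2] at h1
    exact le_of_mul_le_mul_left h1 (hμ t)
  have hfull : ∀ t (y : EuclideanSpace ℝ (Fin d)),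
      φ ‖G u t‖ + (inner ℝ (σ t) (y - G u t) : ℝ) ≤ φ ‖y‖ := by
    intro t y
    have h1 := hsub t (y - G u t)
    have h2 := pfun_le hN (G u t) (y - G u t)
    rw [show G u t + (y - G u t) = y from by abel] at h2
    linarith
  have hconjt : ∀ t, conj φ ‖σ t‖ = (inner ℝ (σ t) (G u t) : ℝ) - φ ‖G u t‖ :=
    fun t => conj_eq_of_subgrad hN (hfull t)
  have hJs : Jstar σ = - J u := by
    rw [hJstar, hJ]
    have h1 : ∑ t, μ t * conj φ ‖σ t‖
        = ∑ t, (μ t * (inner ℝ (σ t) (G u t) : ℝ) - μ t * φ ‖G u t‖) :=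
      Finset.sum_congr rfl fun t _ => by rw [hconjt t]; ring
    rw [h1, Finset.sum_sub_distrib]
    have h2 : ∑ t, μ t * (inner ℝ (σ t) (G u t) : ℝ) = ℓ u := by
      rw [hC] at hσC
      exact hσC u
    rw [h2]
    ring
  have hweak : ∀ (v : E), ∀ τ ∈ C, - Jstar τ ≤ J v := by
    intro v τ hτ
    rw [hJstar, hJ]
    rw [hC] at hτ
    rw [← hτ v]
    have hterm : ∀ t, μ t * (inner ℝ (τ t) (G v t) : ℝ) - μ t * φ ‖G v t‖
        ≤ μ t * conj φ ‖τ t‖ := by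
      intro t
      have hcs : (inner ℝ (τ t) (G v t) : ℝ) ≤ ‖τ t‖ * ‖G v t‖ := real_inner_le_norm _ _
      have hy := young hN (norm_nonneg (τ t)) (norm_nonneg (G v t))
      nlinarith [hμ t]
    have hsum := Finset.sum_le_sum (s := Finset.univ) (fun t _ => hterm t)
    rw [Finset.sum_sub_distrib] at hsum
    linarith
  refine ⟨⟨u, hJu⟩, ⟨σ, hσC⟩, ⟨σ, hσC, ?_⟩, u, σ, hJu, hσC, ?_, by linarith [hJs]⟩
  · intro τ hτ
    have := hweak u τ hτ
    linarith [hJs]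
  · intro τ hτ
    have := hweak u τ hτ
    linarith [hJs]
end

section
/- (Built-in iteration error estimator for the Kačanov scheme.) In the finite discrete setting, assume additionally that φ' is continuous. Let u_n ∈ E satisfy (G u_n)_t ≠ 0 for all t ∈ T, set a_t := φ'(|(G u_n)_t|)/|(G u_n)_t| > 0, and let u_{n+1} ∈ E satisfy the linearized equation Σ_{t∈T} μ_t a_t (G u_{n+1})_t·(G w)_t = ℓ(w) for all w ∈ E. Then σ_{n+1} : T → ℝ^d defined by (σ_{n+1})_t := a_t (G u_{n+1})_t satisfies the discrete divergence constraint, and consequently J(u_{n+1}) − inf_{v ∈ E} J(v) ≤ J(u_{n+1}) + J*(σ_{n+1}). -/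
open MeasureTheory

lemma young_aux (φ φ' : ℝ → ℝ) (hN : IsNFunction φ φ')
    (hcont : ContinuousOn φ' (Set.Ici 0)) (r : ℝ) (hr : 0 ≤ r) {s : ℝ} (hs : 0 ≤ s) :
    r * s - φ s ≤ conj φ r := by
  obtain ⟨s₀', hs₀'⟩ := (Filter.tendsto_atTop.mp hN.deriv_tendsto (r + 1)).exists_forall_of_atTop
  set s₀ : ℝ := max s₀' 0 with hs₀def
  have hs₀0 : (0:ℝ) ≤ s₀ := le_max_right _ _
  have hbdd : BddAbove (Set.range fun s : Set.Ici (0:ℝ) => r * (s : ℝ) - φ s) := by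
    refine ⟨(r + 1) * s₀, ?_⟩
    rintro x ⟨⟨u, hu⟩, rfl⟩
    simp only
    have hu0 : (0:ℝ) ≤ u := hu
    by_cases hcase : u ≤ s₀
    · have h1 : φ u ≥ 0 := hN.nonneg u hu0
      nlinarith
    · push_neg at hcase
      have hab : s₀ ≤ u := le_of_lt hcase
      have hint1 : IntervalIntegrable φ' MeasureTheory.volume s₀ u := by
        apply (hcont.mono ?_).intervalIntegrable
        rw [Set.uIcc_of_le hab]
        exact fun x hx => le_trans hs₀0 hx.1
      have hint2 : IntervalIntegrable (fun _ : ℝ => r + 1) MeasureTheory.volume s₀ u :=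
        intervalIntegrable_const
      have hmono : (u - s₀) * (r + 1) ≤ ∫ x in s₀..u, φ' x := by
        have h := intervalIntegral.integral_mono_on hab hint2 hint1
          (fun x hx => hs₀' x (le_trans (le_max_left _ _) hx.1))
        rwa [intervalIntegral.integral_const, smul_eq_mul] at h
      have hA : IntervalIntegrable φ' MeasureTheory.volume 0 s₀ := by
        apply (hcont.mono ?_).intervalIntegrable
        rw [Set.uIcc_of_le hs₀0]
        exact fun x hx => hx.1
      have hsub : φ u - φ s₀ = ∫ x in s₀..u, φ' x := by
        rw [hN.eq_integral u hu0, hN.eq_integral s₀ hs₀0,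
          ← intervalIntegral.integral_add_adjacent_intervals hA hint1]
        ring
      have hφs₀ : 0 ≤ φ s₀ := hN.nonneg s₀ hs₀0
      nlinarith
  have := le_ciSup hbdd (⟨s, hs⟩ : Set.Ici (0:ℝ))
  simpa [conj] using this

/-- built-in iteration error estimator for the Kačanov scheme. If
`u_{n+1}` solves the linearized equation with weights
`a_t = φ'(|(G u_n)_t|)/|(G u_n)_t|`, then `σ_{n+1} = a • G u_{n+1}` satisfies the
discrete divergence constraint and
`J(u_{n+1}) − inf_E J ≤ J(u_{n+1}) + J*(σ_{n+1})`. -/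
theorem kacanov_error_estimator {d : ℕ} (hd : 1 ≤ d)
    {T : Type*} [Fintype T] [Nonempty T]
    (μ : T → ℝ) (hμ : ∀ t, 0 < μ t)
    {E : Type*} [AddCommGroup E] [Module ℝ E] [FiniteDimensional ℝ E]
    (G : E →ₗ[ℝ] (T → EuclideanSpace ℝ (Fin d))) (hG : Function.Injective G)
    (ℓ : E →ₗ[ℝ] ℝ)
    (φ φ' : ℝ → ℝ) (hN : IsNFunction φ φ')
    (hcont : ContinuousOn φ' (Set.Ici 0))
    (J : E → ℝ) (hJ : ∀ v, J v = (∑ t, μ t * φ ‖G v t‖) - ℓ v)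
    (Jstar : (T → EuclideanSpace ℝ (Fin d)) → ℝ)
    (hJstar : ∀ τ, Jstar τ = ∑ t, μ t * conj φ ‖τ t‖)
    (un : E) (hun : ∀ t, G un t ≠ 0)
    (a : T → ℝ) (ha : ∀ t, a t = φ' ‖G un t‖ / ‖G un t‖)
    (un1 : E)
    (hlin : ∀ w : E, (∑ t, μ t * (a t * (inner ℝ (G un1 t) (G w t) : ℝ))) = ℓ w)
    (σ : T → EuclideanSpace ℝ (Fin d)) (hσ : ∀ t, σ t = a t • G un1 t) :
    (∀ w : E, (∑ t, μ t * (inner ℝ (σ t) (G w t) : ℝ)) = ℓ w) ∧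
    J un1 - (⨅ v : E, J v) ≤ J un1 + Jstar σ := by
  have hdiv : ∀ w : E, (∑ t, μ t * (inner ℝ (σ t) (G w t) : ℝ)) = ℓ w := by
    intro w
    rw [← hlin w]
    refine Finset.sum_congr rfl fun t _ => ?_
    rw [hσ t, real_inner_smul_left]
  refine ⟨hdiv, ?_⟩
  have hlb : ∀ v : E, -(Jstar σ) ≤ J v := by
    intro v
    rw [hJ, hJstar]
    have hle : ℓ v ≤ ∑ t, μ t * (conj φ ‖σ t‖ + φ ‖G v t‖) := by
      rw [← hdiv v]
      refine Finset.sum_le_sum fun t _ => ?_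
      refine mul_le_mul_of_nonneg_left ?_ (le_of_lt (hμ t))
      have h1 : (inner ℝ (σ t) (G v t) : ℝ) ≤ ‖σ t‖ * ‖G v t‖ := real_inner_le_norm _ _
      have h2 : ‖σ t‖ * ‖G v t‖ - φ ‖G v t‖ ≤ conj φ ‖σ t‖ :=
        young_aux φ φ' hN hcont _ (norm_nonneg _) (norm_nonneg _)
      linarith
    have hsplit : ∑ t, μ t * (conj φ ‖σ t‖ + φ ‖G v t‖)
        = (∑ t, μ t * conj φ ‖σ t‖) + ∑ t, μ t * φ ‖G v t‖ := by
      rw [← Finset.sum_add_distrib]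
      exact Finset.sum_congr rfl fun t _ => by ring
    linarith [hle, hsplit.le, hsplit.ge]
  have hinf : -(Jstar σ) ≤ ⨅ v : E, J v := le_ciInf hlb
  linarith
end

section
/- (Equivalence of the dual Kačanov saddle-point system and the weighted linearization.) In the finite discrete setting, assume φ' is strictly increasing and continuous, and let ψ := (φ')⁻¹ denote its inverse, so ψ(t) > 0 for all t > 0. Let σ_n : T → ℝ^d satisfy (σ_n)_t ≠ 0 for all t ∈ T, and set b_t := |(σ_n)_t| / ψ(|(σ_n)_t|) > 0. Then a pair (σ_{n+1}, u_{n+1}) with σ_{n+1} : T → ℝ^d and u_{n+1} ∈ E satisfies the saddle-point system [Σ_{t∈T} μ_t (ψ(|(σ_n)_t|)/|(σ_n)_t|) (σ_{n+1})_t·τ_t = Σ_{t∈T} μ_t (G u_{n+1})_t·τ_t for all τ : T → ℝ^d, and Σ_{t∈T} μ_t (σ_{n+1})_t·(G v)_t = ℓ(v) for all v ∈ E] if and only if u_{n+1} satisfies the weighted linear equation Σ_{t∈T} μ_t b_t (G u_{n+1})_t·(G v)_t = ℓ(v) for all v ∈ E and (σ_{n+1})_t = b_t (G u_{n+1})_t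 for all t ∈ T. -/
open MeasureTheory

/-- equivalence of the dual Kačanov saddle-point system and the
weighted linearization. With `ψ = (φ')⁻¹` the inverse of the strictly increasing
continuous `φ'`, `(σ_n)_t ≠ 0` and `b_t = |(σ_n)_t|/ψ(|(σ_n)_t|)`, the pair
`(σ_{n+1}, u_{n+1})` solves the saddle-point system iff `u_{n+1}` solves the
weighted linear equation and `(σ_{n+1})_t = b_t (G u_{n+1})_t` for all `t`. -/
theorem dual_kacanov_equivalence {d : ℕ} (hd : 1 ≤ d)
    {T : Type*} [Fintype T] [Nonempty T]
    (μ : T → ℝ) (hμ : ∀ t, 0 < μ t)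
    {E : Type*} [AddCommGroup E] [Module ℝ E] [FiniteDimensional ℝ E]
    (G : E →ₗ[ℝ] (T → EuclideanSpace ℝ (Fin d))) (hG : Function.Injective G)
    (ℓ : E →ₗ[ℝ] ℝ)
    (φ φ' : ℝ → ℝ) (hN : IsNFunction φ φ')
    (hsm : StrictMonoOn φ' (Set.Ici 0)) (hcont : ContinuousOn φ' (Set.Ici 0))
    (ψ : ℝ → ℝ)
    (hψ_left : ∀ t ≥ (0:ℝ), ψ (φ' t) = t)
    (hψ_right : ∀ s ≥ (0:ℝ), 0 ≤ ψ s ∧ φ' (ψ s) = s)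
    (hψ_pos : ∀ t > (0:ℝ), 0 < ψ t)
    (σn : T → EuclideanSpace ℝ (Fin d)) (hσn : ∀ t, σn t ≠ 0)
    (b : T → ℝ) (hb : ∀ t, b t = ‖σn t‖ / ψ ‖σn t‖)
    (σn1 : T → EuclideanSpace ℝ (Fin d)) (un1 : E) :
    ((∀ τ : T → EuclideanSpace ℝ (Fin d),
        (∑ t, μ t * ((ψ ‖σn t‖ / ‖σn t‖) * (inner ℝ (σn1 t) (τ t) : ℝ)))
          = ∑ t, μ t * (inner ℝ (G un1 t) (τ t) : ℝ)) ∧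
      (∀ v : E, (∑ t, μ t * (inner ℝ (σn1 t) (G v t) : ℝ)) = ℓ v))
    ↔
    ((∀ v : E, (∑ t, μ t * (b t * (inner ℝ (G un1 t) (G v t) : ℝ))) = ℓ v) ∧
      (∀ t, σn1 t = b t • G un1 t)) := by
  have hns : ∀ t, (0:ℝ) < ‖σn t‖ := fun t => norm_pos_iff.mpr (hσn t)
  have hψpos : ∀ t, 0 < ψ ‖σn t‖ := fun t => hψ_pos _ (hns t)
  have hbc : ∀ t, b t * (ψ ‖σn t‖ / ‖σn t‖) = 1 := by
    intro t
    rw [hb, div_mul_div_comm, mul_comm, div_self (mul_pos (hψpos t) (hns t)).ne']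
  constructor
  · rintro ⟨h1, h2⟩
    have hpw : ∀ t, σn1 t = b t • G un1 t := by
      have key := h1 (fun t => (ψ ‖σn t‖ / ‖σn t‖) • σn1 t - G un1 t)
      have hzero : ∑ t, μ t * ‖(ψ ‖σn t‖ / ‖σn t‖) • σn1 t - G un1 t‖ ^ 2 = 0 := by
        have expand : ∀ t ∈ Finset.univ (α := T),
            μ t * ‖(ψ ‖σn t‖ / ‖σn t‖) • σn1 t - G un1 t‖ ^ 2
              = μ t * ((ψ ‖σn t‖ / ‖σn t‖) *
                  (inner ℝ (σn1 t) ((ψ ‖σn t‖ / ‖σn t‖) • σn1 t - G un1 t) : ℝ))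
                - μ t * (inner ℝ (G un1 t)
                    ((ψ ‖σn t‖ / ‖σn t‖) • σn1 t - G un1 t) : ℝ) := by
          intro t _
          rw [← real_inner_self_eq_norm_sq, inner_sub_left, real_inner_smul_left]
          ring
        rw [Finset.sum_congr rfl expand, Finset.sum_sub_distrib, key, sub_self]
      intro t
      have hterm := (Finset.sum_eq_zero_iff_of_nonneg
        (fun t _ => mul_nonneg (hμ t).le (sq_nonneg _))).mp hzero t (Finset.mem_univ t)
      have hsq : ‖(ψ ‖σn t‖ / ‖σn t‖) • σn1 t - G un1 t‖ ^ 2 = 0 :=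
        (mul_eq_zero.mp hterm).resolve_left (hμ t).ne'
      have hnrm : (ψ ‖σn t‖ / ‖σn t‖) • σn1 t - G un1 t = 0 :=
        norm_eq_zero.mp (pow_eq_zero_iff two_ne_zero |>.mp hsq)
      have heq : (ψ ‖σn t‖ / ‖σn t‖) • σn1 t = G un1 t := sub_eq_zero.mp hnrm
      calc σn1 t = (b t * (ψ ‖σn t‖ / ‖σn t‖)) • σn1 t := by rw [hbc t, one_smul]
        _ = b t • ((ψ ‖σn t‖ / ‖σn t‖) • σn1 t) := by rw [mul_smul]
        _ = b t • G un1 t := by rw [heq]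
    refine ⟨fun v => ?_, hpw⟩
    rw [← h2 v]
    apply Finset.sum_congr rfl
    intro t _
    rw [hpw t, real_inner_smul_left]
  · rintro ⟨hw, hpw⟩
    constructor
    · intro τ
      apply Finset.sum_congr rfl
      intro t _
      rw [hpw t, real_inner_smul_left,
        show ψ ‖σn t‖ / ‖σn t‖ * (b t * (inner ℝ (G un1 t) (τ t) : ℝ))
            = (b t * (ψ ‖σn t‖ / ‖σn t‖)) * (inner ℝ (G un1 t) (τ t) : ℝ) from by ring,
        hbc t, one_mul]
    · intro v
      rw [← hw v]
      apply Finset.sum_congr rfl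
      intro t _
      rw [hpw t, real_inner_smul_left]
end
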